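/- Let {T_n} be a sequence of bounded operators on H converging *-strongly to T (i.e., T_n → T and T_n* → T* strongly), and suppose each T_n satisfies T_n*²T_n² − 2T_n*T_n + I = 0 and Δ_{T_n}(T_nT_n* − I)Δ_{T_n} = 0, where Δ_S = S*S − I. Then T satisfies T*²T² − 2T*T + I = 0 and Δ_T(TT* − I)Δ_T = 0. -/

import Mathlib

open ContinuousLinearMap Filter

/-- The covariance of a bounded operator `T` on a complex Hilbert space:
`cov T = √‖T*T − I‖`. -/
noncomputable def cov {H : Type*} [NormedAddCommGroup H] [InnerProductSpace ℂ H]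
    [CompleteSpace H] (T : H →L[ℂ] H) : ℝ :=
  Real.sqrt ‖adjoint T ∘L T - 1‖
lemma key_lemma {H : Type*} [NormedAddCommGroup H] [InnerProductSpace ℂ H]
    [CompleteSpace H] {A : ℕ → H →L[ℂ] H} {B : H →L[ℂ] H} {C : ℝ}
    (hA : ∀ h : H, Tendsto (fun n => A n h) atTop (nhds (B h)))
    (hC : ∀ n, ‖A n‖ ≤ C)
    {x : ℕ → H} {y : H} (hx : Tendsto x atTop (nhds y)) :
    Tendsto (fun n => A n (x n)) atTop (nhds (B y)) := by
  rw [tendsto_iff_norm_sub_tendsto_zero] at hx ⊢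
  have hbd : ∀ n, ‖A n (x n) - B y‖ ≤ C * ‖x n - y‖ + ‖A n y - B y‖ := by
    intro n
    calc ‖A n (x n) - B y‖ = ‖A n (x n - y) + (A n y - B y)‖ := by
          rw [map_sub]; abel_nf
      _ ≤ ‖A n (x n - y)‖ + ‖A n y - B y‖ := norm_add_le _ _
      _ ≤ C * ‖x n - y‖ + ‖A n y - B y‖ := by
          gcongr
          exact le_trans ((A n).le_opNorm _)
            (mul_le_mul_of_nonneg_right (hC n) (norm_nonneg _))
  have hlim : Tendsto (fun n => C * ‖x n - y‖ + ‖A n y - B y‖) atTop (nhds 0) := by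
    have := (hx.const_mul C).add ((tendsto_iff_norm_sub_tendsto_zero.mp (hA y)))
    simpa using this
  exact squeeze_zero (fun n => norm_nonneg _) hbd hlim

set_option maxHeartbeats 1000000 in
/-- The conditions (i) and (ii) of the algebraic characterization of Brownian unitaries
pass to *-strong limits of sequences. -/
theorem brownian_conditions_star_strong_limit {H : Type*} [NormedAddCommGroup H]
    [InnerProductSpace ℂ H] [CompleteSpace H]
    (T : ℕ → H →L[ℂ] H) (S : H →L[ℂ] H)
    (hconv : ∀ h : H, Filter.Tendsto (fun n => T n h) Filter.atTop (nhds (S h)))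
    (hconvAdj : ∀ h : H,
      Filter.Tendsto (fun n => adjoint (T n) h) Filter.atTop (nhds (adjoint S h)))
    (h1 : ∀ n, adjoint ((T n) ^ 2) ∘L (T n) ^ 2
        - (2 : ℂ) • (adjoint (T n) ∘L T n) + 1 = 0)
    (h2 : ∀ n, (adjoint (T n) ∘L T n - 1) ∘L (T n ∘L adjoint (T n) - 1)
        ∘L (adjoint (T n) ∘L T n - 1) = 0) :
    adjoint (S ^ 2) ∘L S ^ 2 - (2 : ℂ) • (adjoint S ∘L S) + 1 = 0 ∧
      (adjoint S ∘L S - 1) ∘L (S ∘L adjoint S - 1) ∘L (adjoint S ∘L S - 1) = 0 := by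
  -- uniform bound via Banach–Steinhaus
  obtain ⟨C, hC⟩ : ∃ C, ∀ n, ‖T n‖ ≤ C := by
    apply banach_steinhaus
    intro x
    obtain ⟨c, hc⟩ := (hconv x).norm.bddAbove_range
    exact ⟨c, fun i => hc ⟨i, rfl⟩⟩
  have hCa : ∀ n, ‖adjoint (T n)‖ ≤ C := fun n => (adjoint.norm_map (T n)).le.trans (hC n)
  have hT : ∀ {x : ℕ → H} {y : H}, Tendsto x atTop (nhds y) →
      Tendsto (fun n => T n (x n)) atTop (nhds (S y)) := fun hx => key_lemma hconv hC hx
  have hTa : ∀ {x : ℕ → H} {y : H}, Tendsto x atTop (nhds y) →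
      Tendsto (fun n => adjoint (T n) (x n)) atTop (nhds (adjoint S y)) :=
    fun hx => key_lemma hconvAdj hCa hx
  have hadj : ∀ A : H →L[ℂ] H, adjoint (A ^ 2) = (adjoint A) ^ 2 := fun A => by
    rw [← star_eq_adjoint, ← star_eq_adjoint, star_pow]
  have hsq : ∀ (A : H →L[ℂ] H) (x : H), (A ^ 2) x = A (A x) := fun A x => by
    rw [sq]; rfl
  constructor
  · ext h
    simp only [add_apply, sub_apply, smul_apply, comp_apply, one_apply, zero_apply,
      hadj, hsq]
    have he : Tendsto (fun n => adjoint (T n) (adjoint (T n) (T n (T n h)))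
        - (2 : ℂ) • adjoint (T n) (T n h) + h) atTop
        (nhds (adjoint S (adjoint S (S (S h))) - (2 : ℂ) • adjoint S (S h) + h)) :=
      ((hTa (hTa (hT (hT tendsto_const_nhds)))).sub
        ((hTa (hT tendsto_const_nhds)).const_smul (2 : ℂ))).add tendsto_const_nhds
    refine tendsto_nhds_unique he ?_
    · have hz : ∀ n, adjoint (T n) (adjoint (T n) (T n (T n h)))
          - (2 : ℂ) • adjoint (T n) (T n h) + h = 0 := by
        intro n
        have := congrFun (congrArg DFunLike.coe (h1 n)) h
        simpa only [add_apply, sub_apply, smul_apply, comp_apply, one_apply,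
          zero_apply, hadj, hsq, ContinuousLinearMap.one_apply] using this
      simp only [hz]
      exact tendsto_const_nhds
  · ext h
    simp only [comp_apply, sub_apply, one_apply, zero_apply]
    have hu : Tendsto (fun n => adjoint (T n) (T n h) - h) atTop
        (nhds (adjoint S (S h) - h)) := (hTa (hT tendsto_const_nhds)).sub tendsto_const_nhds
    have hv : Tendsto (fun n => T n (adjoint (T n) (adjoint (T n) (T n h) - h))
        - (adjoint (T n) (T n h) - h)) atTop
        (nhds (S (adjoint S (adjoint S (S h) - h)) - (adjoint S (S h) - h))) :=
      (hT (hTa hu)).sub hu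
    have he : Tendsto (fun n =>
        adjoint (T n) (T n (T n (adjoint (T n) (adjoint (T n) (T n h) - h))
          - (adjoint (T n) (T n h) - h)))
        - (T n (adjoint (T n) (adjoint (T n) (T n h) - h)) - (adjoint (T n) (T n h) - h)))
        atTop (nhds (adjoint S (S (S (adjoint S (adjoint S (S h) - h))
          - (adjoint S (S h) - h)))
        - (S (adjoint S (adjoint S (S h) - h)) - (adjoint S (S h) - h)))) :=
      (hTa (hT hv)).sub hv
    refine tendsto_nhds_unique he ?_
    have hz : ∀ n,
        adjoint (T n) (T n (T n (adjoint (T n) (adjoint (T n) (T n h) - h))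
          - (adjoint (T n) (T n h) - h)))
        - (T n (adjoint (T n) (adjoint (T n) (T n h) - h)) - (adjoint (T n) (T n h) - h))
          = 0 := by
      intro n
      have := congrFun (congrArg DFunLike.coe (h2 n)) h
      simpa only [comp_apply, sub_apply, one_apply, zero_apply, ContinuousLinearMap.one_apply] using this
    simp only [hz]
    exact tendsto_const_nhds
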